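/- Euclidean case of Lemma 4.2: let x, y, z, w, x', y', z', w' be points in the Euclidean plane with ‖x-y‖ = ‖x'-y'‖, ‖y-z‖ = ‖y'-z'‖, ‖z-w‖ = ‖z'-w'‖, ‖w-x‖ = ‖w'-x'‖, and ‖x'-z'‖ ≤ ‖x-z‖. If the segments [x', z'] and [y', w'] intersect, then ‖y-w‖ ≤ ‖y'-w'‖. -/
import Mathlib

lemma stewart_key {E : Type*} [NormedAddCommGroup E] [InnerProductSpace ℝ E]
    (x y z : E) (a b : ℝ) (hab : a + b = 1) :
    ‖y - (a • x + b • z)‖ ^ 2 = a * ‖y - x‖ ^ 2 + b * ‖y - z‖ ^ 2 - a * b * ‖x - z‖ ^ 2 := by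
  have hb : b = 1 - a := by linarith
  subst hb
  simp only [← real_inner_self_eq_norm_sq]
  simp only [inner_sub_left, inner_sub_right, inner_add_left, inner_add_right,
    inner_smul_left, inner_smul_right, RCLike.conj_to_real, real_inner_comm x y,
    real_inner_comm z y, real_inner_comm z x]
  ring

set_option maxHeartbeats 2000000 in
theorem stmt_11 (x y z w x' y' z' w' : EuclideanSpace ℝ (Fin 2))
    (h1 : ‖x - y‖ = ‖x' - y'‖) (h2 : ‖y - z‖ = ‖y' - z'‖)
    (h3 : ‖z - w‖ = ‖z' - w'‖) (h4 : ‖w - x‖ = ‖w' - x'‖)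
    (h5 : ‖x' - z'‖ ≤ ‖x - z‖)
    (hint : (segment ℝ x' z' ∩ segment ℝ y' w').Nonempty) :
    ‖y - w‖ ≤ ‖y' - w'‖ := by
  obtain ⟨p, hp1, hp2⟩ := hint
  obtain ⟨a, b, ha, hb, hab, hp⟩ := hp1
  set q : EuclideanSpace ℝ (Fin 2) := a • x + b • z with hq
  have hyx : ‖y - x‖ = ‖y' - x'‖ := by rw [norm_sub_rev, norm_sub_rev y' x']; exact h1
  have hwz : ‖w - z‖ = ‖w' - z'‖ := by rw [norm_sub_rev, norm_sub_rev w' z']; exact h3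
  have hwx : ‖w - x‖ = ‖w' - x'‖ := h4
  have key1 := stewart_key x y z a b hab
  have key2 := stewart_key x w z a b hab
  have key1' := stewart_key x' y' z' a b hab
  have key2' := stewart_key x' w' z' a b hab
  rw [hp] at key1' key2'
  rw [← hq] at key1 key2
  have hnn : (0:ℝ) ≤ ‖x' - z'‖ := norm_nonneg _
  have hsq5 : ‖x' - z'‖ ^ 2 ≤ ‖x - z‖ ^ 2 := pow_le_pow_left₀ hnn h5 2
  have hyq : ‖y - q‖ ≤ ‖y' - p‖ := by
    have hsq : ‖y - q‖ ^ 2 ≤ ‖y' - p‖ ^ 2 := by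
      rw [key1, key1', hyx, h2]
      nlinarith [mul_nonneg ha hb, hsq5]
    have := Real.sqrt_le_sqrt hsq
    rwa [Real.sqrt_sq (norm_nonneg _), Real.sqrt_sq (norm_nonneg _)] at this
  have hwq : ‖w - q‖ ≤ ‖w' - p‖ := by
    have hsq : ‖w - q‖ ^ 2 ≤ ‖w' - p‖ ^ 2 := by
      rw [key2, key2', hwx, hwz]
      nlinarith [mul_nonneg ha hb, hsq5]
    have := Real.sqrt_le_sqrt hsq
    rwa [Real.sqrt_sq (norm_nonneg _), Real.sqrt_sq (norm_nonneg _)] at this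
  have hseg : dist y' p + dist p w' = dist y' w' := dist_add_dist_of_mem_segment hp2
  have htri : ‖y - w‖ ≤ ‖y - q‖ + ‖w - q‖ := by
    have : y - w = (y - q) - (w - q) := by abel
    rw [this]
    exact (norm_sub_le _ _)
  calc ‖y - w‖ ≤ ‖y - q‖ + ‖w - q‖ := htri
    _ ≤ ‖y' - p‖ + ‖w' - p‖ := add_le_add hyq hwq
    _ = dist y' p + dist p w' := by rw [dist_eq_norm, dist_eq_norm, norm_sub_rev p w']
    _ = ‖y' - w'‖ := by rw [hseg, dist_eq_norm]
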